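/- Let G be a finite group, p a prime, P a Sylow p-subgroup of G, and N = N_G(P). Let N act on G by conjugation. If g ∈ G is such that the N-orbit of g under conjugation has cardinality coprime to p, then every element of that orbit centralizes P; in particular the whole N-orbit is contained in C_G(P) ⊆ N. -/

import Mathlib

open Subgroup MulAction

lemma sylow_le_of_coprime_index' {p : ℕ} [Fact p.Prime] {H : Type*} [Group H] [Finite H]
    (P : Sylow p H) (hPn : (P : Subgroup H).Normal) {S : Subgroup H}
    (hS : p.Coprime S.index) : (P : Subgroup H) ≤ S := by
  obtain ⟨Q⟩ : Nonempty (Sylow p S) := Sylow.nonempty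
  have hfac : (Nat.card S).factorization p = (Nat.card H).factorization p := by
    have h1 : Nat.card S * S.index = Nat.card H := Subgroup.card_mul_index S
    have hS0 : Nat.card S ≠ 0 := Nat.card_pos.ne'
    have hI0 : S.index ≠ 0 := by
      intro h0; rw [h0, mul_zero] at h1; exact (Nat.card_pos (α := H)).ne' h1.symm
    have h3 : (S.index).factorization p = 0 :=
      Nat.factorization_eq_zero_of_not_dvd
        ((Nat.Prime.coprime_iff_not_dvd Fact.out).mp hS)
    rw [← h1, Nat.factorization_mul hS0 hI0, Finsupp.add_apply, h3, add_zero]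
  have hcard : Nat.card ((Q : Subgroup S).map S.subtype) = p ^ (Nat.card H).factorization p := by
    rw [← hfac, ← Q.card_eq_multiplicity]
    exact Nat.card_congr (Subgroup.equivMapOfInjective _ _ Subtype.coe_injective).symm.toEquiv
  let R : Sylow p H := Sylow.ofCard _ hcard
  haveI := P.unique_of_normal hPn
  have hRP : R = P := Subsingleton.elim _ _
  have : (P : Subgroup H) = (Q : Subgroup S).map S.subtype := by
    rw [← hRP]; rfl
  rw [this]
  exact Subgroup.map_subtype_le _

/-- Let `N = N_G(P)` act on `G` by conjugation.  If the `N`-orbit of `g` has cardinality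
coprime to `p`, then every element of that orbit centralizes `P`; in particular the whole
orbit lies in `C_G(P)`, and `C_G(P) ≤ N`. -/
theorem coprime_conj_norbit_centralizes {p : ℕ} [Fact p.Prime]
    {G : Type*} [Group G] [Fintype G] (P : Sylow p G) (g : G)
    (h : p.Coprime
      (Nat.card {h : G | ∃ n ∈ Subgroup.normalizer ((P : Subgroup G) : Set G), n * g * n⁻¹ = h})) :
    (∀ h' ∈ {h : G | ∃ n ∈ Subgroup.normalizer ((P : Subgroup G) : Set G), n * g * n⁻¹ = h},
        h' ∈ Subgroup.centralizer ((P : Subgroup G) : Set G)) ∧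
      Subgroup.centralizer ((P : Subgroup G) : Set G) ≤ Subgroup.normalizer ((P : Subgroup G) : Set G) := by
  classical
  -- Move everything to `ConjAct G`.
  set e : G ≃* ConjAct G := ConjAct.toConjAct with he
  let PC : Sylow p (ConjAct G) :=
    P.comapOfInjective e.symm.toMonoidHom e.symm.injective
      (by rw [MonoidHom.range_eq_top_of_surjective _ e.symm.surjective]; exact le_top)
  have hPC : (PC : Subgroup (ConjAct G)) = ((P : Subgroup G)).map e.toMonoidHom := by
    show Subgroup.comap e.symm.toMonoidHom (P : Subgroup G) = _
    exact (Subgroup.map_equiv_eq_comap_symm e _).symm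
  set N' : Subgroup (ConjAct G) := Subgroup.normalizer ((PC : Subgroup (ConjAct G)) : Set (ConjAct G)) with hN'
  have hN'map : N' = (Subgroup.normalizer ((P : Subgroup G) : Set G)).map e.toMonoidHom := by
    rw [hN', hPC, Subgroup.map_equiv_normalizer_eq]
  -- the set is the orbit of `g` under `N'`
  have hset : {h : G | ∃ n ∈ Subgroup.normalizer ((P : Subgroup G) : Set G), n * g * n⁻¹ = h}
      = MulAction.orbit N' g := by
    ext x
    simp only [Set.mem_setOf_eq, MulAction.mem_orbit_iff]
    constructor
    · rintro ⟨n, hn, rfl⟩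
      refine ⟨⟨e n, by rw [hN'map]; exact ⟨n, hn, rfl⟩⟩, ?_⟩
      show (e n) • g = _
      rw [he]
      exact ConjAct.toConjAct_smul n g
    · rintro ⟨⟨x, hx⟩, rfl⟩
      rw [hN'map] at hx
      obtain ⟨n, hn, rfl⟩ := hx
      exact ⟨n, hn, (ConjAct.toConjAct_smul n g).symm⟩
  -- orbit-stabilizer
  have hcop : p.Coprime (MulAction.stabilizer N' g).index := by
    rwa [hset, Nat.card_coe_set_eq, ← MulAction.index_stabilizer] at h
  -- the Sylow subgroup of `N'`
  have hle : (PC : Subgroup (ConjAct G)) ≤ N' := Subgroup.le_normalizer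
  let P'' : Sylow p N' := PC.subtype hle
  have hP''n : (P'' : Subgroup N').Normal := by
    rw [Sylow.coe_subtype]; exact Subgroup.normal_in_normalizer
  have hkey := sylow_le_of_coprime_index' P'' hP''n hcop
  -- hence `g` centralizes `P`
  have hg : g ∈ Subgroup.centralizer ((P : Subgroup G) : Set G) := by
    rw [Subgroup.mem_centralizer_iff]
    intro m hm
    have hmPC : e m ∈ (PC : Subgroup (ConjAct G)) := by
      rw [hPC]; exact ⟨m, hm, rfl⟩
    have hmem : (⟨e m, hle hmPC⟩ : N') ∈ (P'' : Subgroup N') := by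
      rw [Sylow.coe_subtype, Subgroup.mem_subgroupOf]; exact hmPC
    have hst := hkey hmem
    rw [MulAction.mem_stabilizer_iff] at hst
    have : (e m) • g = g := hst
    rw [he, ConjAct.toConjAct_smul] at this
    have h1 : m * g = g * m := by
      have := congrArg (· * m) this
      simpa [mul_assoc] using this
    exact h1
  refine ⟨?_, ?_⟩
  · rintro h' ⟨n, hn, rfl⟩
    rw [Subgroup.mem_centralizer_iff]
    intro m hm
    have hmn : n⁻¹ * m * n ∈ (P : Subgroup G) := by
      have := (Subgroup.mem_normalizer_iff.mp hn (n⁻¹ * m * n)).mpr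
      apply this
      have e2 : n * (n⁻¹ * m * n) * n⁻¹ = m := by group
      rw [e2]; exact hm
    have hc := Subgroup.mem_centralizer_iff.mp hg _ hmn
    have := congrArg (fun x => n * x * n⁻¹) hc
    simp only [mul_assoc] at this ⊢
    group at this ⊢
    exact this
  · intro x hx
    rw [Subgroup.mem_normalizer_iff]
    intro m
    rw [Subgroup.mem_centralizer_iff] at hx
    constructor
    · intro hm
      have := hx m hm
      have : x * m * x⁻¹ = m := by rw [← this]; group
      rw [this]; exact hm
    · intro hm
      have := hx _ hm
      have h2 : m = x * m * x⁻¹ := by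
        have h4 : x * m = x * (x * m * x⁻¹) := by rw [← this]; group
        exact mul_left_cancel h4
      rw [h2]; exact hm
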